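/- For every real number α, the sequence ({n α})_{n≥1} of fractional parts of the pure Kronecker sequence does not have Poissonian pair correlations. -/

import Mathlib

open Filter

/-- Distance to the nearest integer. -/
noncomputable def nearestIntDist (x : ℝ) : ℝ := |x - round x|

open Classical in
/-- The pair correlation function
`R₂([-s,s],(x_n),N) = (1/N) · #{1 ≤ i ≠ j ≤ N : ‖x_i − x_j‖ ≤ s/N}`. -/
noncomputable def pairCorrFn (x : ℕ → ℝ) (s : ℝ) (N : ℕ) : ℝ :=
  (1 / (N : ℝ)) * (((Finset.Icc 1 N ×ˢ Finset.Icc 1 N).filter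
    (fun p => p.1 ≠ p.2 ∧ nearestIntDist (x p.1 - x p.2) ≤ s / N)).card : ℝ)

/-- A sequence has Poissonian pair correlations if `R₂ → 2s` for every `s > 0`. -/
def HasPoissonianPairCorrelations (x : ℕ → ℝ) : Prop :=
  ∀ s : ℝ, 0 < s → Tendsto (fun N : ℕ => pairCorrFn x s N) atTop (nhds (2 * s))

/-! ### Auxiliary lemmas about `nearestIntDist` -/

lemma nid_nonneg (x : ℝ) : 0 ≤ nearestIntDist x := abs_nonneg _

lemma nid_le_abs (x : ℝ) (m : ℤ) : nearestIntDist x ≤ |x - m| := round_le x m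

lemma nid_eq_of_eq_add_int (x y : ℝ) (m : ℤ) (h : x = y + m) :
    nearestIntDist x = nearestIntDist y := by
  apply le_antisymm
  · have h1 : x - ((round y + m : ℤ) : ℝ) = y - round y := by push_cast; rw [h]; ring
    calc nearestIntDist x ≤ |x - ((round y + m : ℤ) : ℝ)| := nid_le_abs _ _
      _ = nearestIntDist y := by rw [h1]; rfl
  · have h1 : y - ((round x - m : ℤ) : ℝ) = x - round x := by push_cast; rw [h]; ring
    calc nearestIntDist y ≤ |y - ((round x - m : ℤ) : ℝ)| := nid_le_abs _ _
      _ = nearestIntDist x := by rw [h1]; rfl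

lemma nid_neg (x : ℝ) : nearestIntDist (-x) = nearestIntDist x := by
  apply le_antisymm
  · have h1 : -x - ((-(round x) : ℤ) : ℝ) = -(x - round x) := by push_cast; ring
    calc nearestIntDist (-x) ≤ |-x - ((-(round x) : ℤ) : ℝ)| := nid_le_abs _ _
      _ = nearestIntDist x := by rw [h1, abs_neg]; rfl
  · have h1 : x - ((-(round (-x)) : ℤ) : ℝ) = -(-x - round (-x)) := by push_cast; ring
    calc nearestIntDist x ≤ |x - ((-(round (-x)) : ℤ) : ℝ)| := nid_le_abs _ _
      _ = nearestIntDist (-x) := by rw [h1, abs_neg]; rfl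

lemma nid_int (m : ℤ) : nearestIntDist (m : ℝ) = 0 := by
  have h1 := nid_le_abs (m : ℝ) m
  have h2 := nid_nonneg (m : ℝ)
  simp only [sub_self, abs_zero] at h1
  linarith

lemma nid_fract_sub_int (x y : ℝ) (m : ℤ) (h : x - y = m) :
    nearestIntDist (Int.fract x - Int.fract y) = 0 := by
  have heq : Int.fract x - Int.fract y = 0 + ((m - ⌊x⌋ + ⌊y⌋ : ℤ) : ℝ) := by
    rw [Int.fract, Int.fract]
    push_cast
    linarith
  rw [nid_eq_of_eq_add_int _ _ _ heq]
  simpa using nid_int 0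

/-! ### Generic bounds on the pair correlation function -/

lemma pairCorr_lb (x : ℕ → ℝ) (s : ℝ) (N : ℕ) (t : Finset (ℕ × ℕ))
    (h : ∀ p ∈ t, ((p.1 ∈ Finset.Icc 1 N ∧ p.2 ∈ Finset.Icc 1 N) ∧ p.1 ≠ p.2 ∧
      nearestIntDist (x p.1 - x p.2) ≤ s / N)) :
    (t.card : ℝ) / N ≤ pairCorrFn x s N := by
  unfold pairCorrFn
  have key : ∀ F : Finset (ℕ × ℕ), t ⊆ F → (t.card : ℝ) / N ≤ 1 / N * F.card := by
    intro F hF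
    rw [div_eq_mul_one_div, mul_comm]
    apply mul_le_mul_of_nonneg_left _ (by positivity)
    exact_mod_cast Finset.card_le_card hF
  apply key
  intro p hp
  rw [Finset.mem_filter, Finset.mem_product]
  exact h p hp

lemma pairCorr_eq_zero (x : ℕ → ℝ) (s : ℝ) (N : ℕ)
    (h : ∀ p : ℕ × ℕ, p.1 ∈ Finset.Icc 1 N → p.2 ∈ Finset.Icc 1 N → p.1 ≠ p.2 →
      ¬ nearestIntDist (x p.1 - x p.2) ≤ s / N) :
    pairCorrFn x s N = 0 := by
  unfold pairCorrFn
  convert mul_zero (1 / (N : ℝ)) using 2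
  rw [Nat.cast_eq_zero, Finset.card_eq_zero, Finset.eq_empty_iff_forall_notMem]
  intro p hp
  rw [Finset.mem_filter, Finset.mem_product] at hp
  exact h p hp.1.1 hp.1.2 hp.2.1 hp.2.2

/-! ### The key Diophantine lemma -/

/-- For irrational `α` there are arbitrarily large `N` such that `‖d α‖ > 1/(2N)` for
all `1 ≤ d < N`. -/
lemma key_lemma (α : ℝ) (hα : Irrational α) (n : ℕ) :
    ∃ N : ℕ, n < N ∧ ∀ d : ℕ, 1 ≤ d → d < N →
      1 / (2 * (N : ℝ)) < nearestIntDist ((d : ℝ) * α) := by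
  classical
  set g : ℕ → ℝ := fun d => nearestIntDist ((d : ℝ) * α) with hgdef
  have gpos : ∀ d : ℕ, 1 ≤ d → 0 < g d := by
    intro d hd
    have hirr : Irrational ((d : ℝ) * α) := hα.natCast_mul (by omega)
    exact abs_pos.mpr (sub_ne_zero.mpr (hirr.ne_int _))
  set m := n + 1 with hm
  obtain ⟨q, hqmem, hqmin⟩ := Finset.exists_min_image (Finset.Icc 1 m) g ⟨1, by simp [hm]⟩
  obtain ⟨hq1, hqm⟩ := Finset.mem_Icc.mp hqmem
  set v := g q with hv
  have hvpos : 0 < v := gpos q hq1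
  obtain ⟨n', hn'⟩ := exists_nat_one_div_lt hvpos
  obtain ⟨k, hk0, _, hkle⟩ :=
    Real.exists_nat_abs_mul_sub_round_le α (n := n' + 1) (Nat.succ_pos _)
  have hkv : g k < v := by
    refine lt_of_le_of_lt (le_trans hkle ?_) hn'
    apply one_div_le_one_div_of_le
    · positivity
    · push_cast; linarith
  have hex : ∃ N, 1 ≤ N ∧ g N < v := ⟨k, hk0, hkv⟩
  set N := Nat.find hex with hNdef
  obtain ⟨hN1, hNv⟩ := Nat.find_spec hex
  have hlow : ∀ d, 1 ≤ d → d < N → v ≤ g d := by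
    intro d h1 h2
    by_contra hlt
    exact Nat.find_min hex h2 ⟨h1, not_le.mp hlt⟩
  have hmN : m < N := by
    by_contra hle
    push_neg at hle
    exact absurd hNv (not_lt.mpr (hqmin N (Finset.mem_Icc.mpr ⟨hN1, hle⟩)))
  rw [← hNdef] at hN1 hNv
  clear_value N
  have hqN : q < N := lt_of_le_of_lt hqm hmN
  set θ := (q : ℝ) * α - round ((q : ℝ) * α) with hθ
  set θ' := (N : ℝ) * α - round ((N : ℝ) * α) with hθ'
  have hθv : |θ| = v := rfl
  have hθ'v : |θ'| = g N := rfl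
  have hθne : θ ≠ 0 := by
    intro h0; rw [h0, abs_zero] at hθv; exact absurd hθv.symm (ne_of_gt hvpos)
  have hgN0 : 0 < g N := gpos N hN1
  have hθ'ne : θ' ≠ 0 := by
    intro h0; rw [h0, abs_zero] at hθ'v; exact absurd hθ'v.symm (ne_of_gt hgN0)
  have hNpos : (0 : ℝ) < N := by
    have : 0 < N := by omega
    exact_mod_cast this
  rcases lt_trichotomy (θ * θ') 0 with hsgn | hsgn | hsgn
  · -- opposite signs: the determinant argument gives `v > 1/(2N)`
    set D : ℤ := (q : ℤ) * round ((N : ℝ) * α) - (N : ℤ) * round ((q : ℝ) * α) with hD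
    have hDr : (D : ℝ) = (N : ℝ) * θ - (q : ℝ) * θ' := by
      rw [hθ, hθ', hD]; push_cast; ring
    have hqpos : (0 : ℝ) < q := by exact_mod_cast hq1
    have hDne : D ≠ 0 := by
      intro h0
      rw [h0] at hDr
      simp only [Int.cast_zero] at hDr
      have hNθ : (N : ℝ) * θ = (q : ℝ) * θ' := by linarith
      have hkey : (N : ℝ) * (θ * θ') = (q : ℝ) * (θ' * θ') := by
        rw [← mul_assoc, hNθ, mul_assoc]
      have h1 : (N : ℝ) * (θ * θ') < 0 := mul_neg_of_pos_of_neg hNpos hsgn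
      have h2 : (0 : ℝ) ≤ (q : ℝ) * (θ' * θ') := mul_nonneg hqpos.le (mul_self_nonneg θ')
      linarith
    have hD1 : (1 : ℝ) ≤ |(D : ℝ)| := by
      rw [← Int.cast_abs]
      exact_mod_cast Int.one_le_abs hDne
    have habs : |(D : ℝ)| ≤ (N : ℝ) * v + (q : ℝ) * g N := by
      rw [hDr]
      calc |(N : ℝ) * θ - (q : ℝ) * θ'| ≤ |(N : ℝ) * θ| + |(q : ℝ) * θ'| := by
            rw [sub_eq_add_neg]
            exact (abs_add_le _ _).trans (by rw [abs_neg])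
        _ = (N : ℝ) * v + (q : ℝ) * g N := by
            rw [abs_mul, abs_mul, hθv, hθ'v, abs_of_pos hNpos, abs_of_pos hqpos]
    have hqNr : (q : ℝ) < N := by exact_mod_cast hqN
    have hvN : 1 / (2 * (N : ℝ)) < v := by
      rw [div_lt_iff₀ (by positivity)]
      nlinarith
    refine ⟨N, ?_, ?_⟩
    · omega
    · intro d h1 h2
      exact lt_of_lt_of_le hvN (hlow d h1 h2)
  · exact absurd hsgn (mul_ne_zero hθne hθ'ne)
  · -- same signs: contradiction with minimality of `v` at `d = N - q`
    exfalso
    set e := N - q with he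
    have he1 : 1 ≤ e := by omega
    have he2 : e < N := by omega
    have hcast : (e : ℝ) = (N : ℝ) - q := by
      rw [he]; push_cast [Nat.cast_sub hqN.le]; ring
    have hge : g e ≤ |θ' - θ| := by
      have heq : (e : ℝ) * α - ((round ((N : ℝ) * α) - round ((q : ℝ) * α) : ℤ) : ℝ)
          = θ' - θ := by
        rw [hθ, hθ', hcast]; push_cast; ring
      calc g e ≤ |(e : ℝ) * α - ((round ((N : ℝ) * α) - round ((q : ℝ) * α) : ℤ) : ℝ)| :=
            nid_le_abs _ _
        _ = |θ' - θ| := by rw [heq]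
    have hb1 : -v < θ' := by
      have h := neg_abs_le θ'
      rw [hθ'v] at h
      linarith
    have hb2 : θ' < v := by
      have h := le_abs_self θ'
      rw [hθ'v] at h
      linarith
    have hlt : |θ' - θ| < v := by
      rw [abs_lt]
      rcases abs_cases θ with ⟨ha1, ha2⟩ | ⟨ha1, ha2⟩
      · have hθeq : θ = v := by linarith [hθv]
        have hpos : 0 < θ' := by nlinarith
        constructor <;> linarith
      · have hθeq : θ = -v := by linarith [hθv]
        have hneg : θ' < 0 := by nlinarith
        constructor <;> linarith
    have := hlow e he1 he2
    linarith

/-- Translation invariance for the Kronecker sequence differences. -/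
lemma fract_sub_eq (α : ℝ) (i j : ℕ) (h : j ≤ i) :
    nearestIntDist (Int.fract ((i : ℝ) * α) - Int.fract ((j : ℝ) * α))
      = nearestIntDist (((i - j : ℕ) : ℝ) * α) := by
  apply nid_eq_of_eq_add_int _ _ (⌊(j : ℝ) * α⌋ - ⌊(i : ℝ) * α⌋)
  rw [Int.fract, Int.fract, Nat.cast_sub h]
  push_cast
  ring

/-! ### The main theorem -/

/-- For every real `α` the pure Kronecker sequence `({n α})_{n ≥ 1}` does not have
Poissonian pair correlations. -/
theorem kronecker_not_poissonian (α : ℝ) :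
    ¬ HasPoissonianPairCorrelations (fun n => Int.fract ((n : ℝ) * α)) := by
  intro h
  have h4 := h (1 / 4) (by norm_num)
  by_cases hα : Irrational α
  · -- irrational case: infinitely many `N` with no close pairs at all
    have hev : ∀ᶠ N in atTop,
        (1 / 4 : ℝ) < pairCorrFn (fun n => Int.fract ((n : ℝ) * α)) (1 / 4) N :=
      h4.eventually (eventually_gt_nhds (by norm_num))
    have hfr : ∃ᶠ N in atTop,
        pairCorrFn (fun n => Int.fract ((n : ℝ) * α)) (1 / 4) N = 0 := by
      rw [frequently_atTop]
      intro n
      obtain ⟨N, hnN, hN⟩ := key_lemma α hα n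
      have hNpos : 0 < N := by omega
      have hNr : (0 : ℝ) < N := by exact_mod_cast hNpos
      refine ⟨N, by omega, ?_⟩
      apply pairCorr_eq_zero
      intro p hp1 hp2 hne hle
      rw [Finset.mem_Icc] at hp1 hp2
      have main : ∀ i j : ℕ, 1 ≤ j → i ≤ N → j < i →
          ¬ nearestIntDist (Int.fract ((i : ℝ) * α) - Int.fract ((j : ℝ) * α))
              ≤ 1 / 4 / (N : ℝ) := by
        intro i j hj hi hji hle'
        have hd1 : 1 ≤ i - j := by omega
        have hd2 : i - j < N := by omega
        have hgt := hN (i - j) hd1 hd2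
        rw [fract_sub_eq α i j hji.le] at hle'
        have hcmp : (1 : ℝ) / 4 / (N : ℝ) < 1 / (2 * (N : ℝ)) := by
          rw [div_lt_div_iff₀ (by positivity) (by positivity)]
          nlinarith
        linarith
      rcases lt_or_gt_of_ne hne with hlt | hgt
      · apply main p.2 p.1 hp1.1 hp2.2 hlt
        rw [← nid_neg, neg_sub]
        exact hle
      · exact main p.1 p.2 hp2.1 hp1.2 hgt hle
    obtain ⟨N, h0, hgt⟩ := (hfr.and_eventually hev).exists
    rw [h0] at hgt
    norm_num at hgt
  · -- rational case: exact repetitions give far too many close pairs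
    rw [Irrational, not_not] at hα
    obtain ⟨r, hr⟩ := hα
    set b := r.den with hb
    have hbpos : 0 < b := r.pos
    have hbα : (b : ℝ) * α = ((r.num : ℤ) : ℝ) := by
      rw [← hr, Rat.cast_def]
      have hden : ((r.den : ℝ)) ≠ 0 := Nat.cast_ne_zero.mpr r.den_ne_zero
      field_simp
      rw [hb]; ring
    have hbk : ∀ k : ℕ, ((b * k : ℕ) : ℝ) * α = (k : ℝ) * ((r.num : ℤ) : ℝ) := by
      intro k
      push_cast
      rw [mul_comm (b : ℝ) (k : ℝ), mul_assoc, hbα]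
    have hev : ∀ᶠ N in atTop,
        pairCorrFn (fun n => Int.fract ((n : ℝ) * α)) (1 / 4) N < 1 :=
      h4.eventually (eventually_lt_nhds (by norm_num))
    have hfr : ∃ᶠ N in atTop,
        (1 : ℝ) ≤ pairCorrFn (fun n => Int.fract ((n : ℝ) * α)) (1 / 4) N := by
      rw [frequently_atTop]
      intro n
      set M := max (n + 1) (b + 1) with hM
      have hM1 : n + 1 ≤ M := le_max_left _ _
      have hMb : b + 1 ≤ M := le_max_right _ _
      refine ⟨b * M, ?_, ?_⟩
      · calc n ≤ M := by omega
          _ ≤ b * M := Nat.le_mul_of_pos_left M hbpos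
      · set N := b * M with hN
        have hNpos : 0 < N := Nat.mul_pos hbpos (by omega)
        have hNr : (0 : ℝ) < N := by exact_mod_cast hNpos
        set t : Finset (ℕ × ℕ) :=
          (Finset.Icc 1 M).offDiag.image (fun p => (b * p.1, b * p.2)) with ht
        have hinj : Set.InjOn (fun p : ℕ × ℕ => (b * p.1, b * p.2))
            ((Finset.Icc 1 M).offDiag : Set (ℕ × ℕ)) := by
          intro p _ q _ hpq
          rw [Prod.mk.injEq] at hpq
          obtain ⟨h1, h2⟩ := hpq
          exact Prod.ext (Nat.eq_of_mul_eq_mul_left hbpos h1)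
            (Nat.eq_of_mul_eq_mul_left hbpos h2)
        have hcard : t.card = M * M - M := by
          rw [ht, Finset.card_image_of_injOn hinj, Finset.offDiag_card, Nat.card_Icc]
          simp
        have hlb := pairCorr_lb (fun n => Int.fract ((n : ℝ) * α)) (1 / 4) N t ?_
        · refine le_trans ?_ hlb
          rw [hcard, le_div_iff₀ hNr]
          have hMM : M ≤ M * M := Nat.le_mul_of_pos_left M (by omega)
          rw [Nat.cast_sub hMM]
          have hMbr : (b : ℝ) + 1 ≤ M := by exact_mod_cast hMb
          have hbr : (0 : ℝ) < b := by exact_mod_cast hbpos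
          have hNrr : ((N : ℕ) : ℝ) = (b : ℝ) * M := by rw [hN]; push_cast; ring
          rw [hNrr]
          push_cast
          nlinarith
        · intro p hp
          rw [ht, Finset.mem_image] at hp
          obtain ⟨q, hq, rfl⟩ := hp
          rw [Finset.mem_offDiag] at hq
          obtain ⟨hq1, hq2, hqne⟩ := hq
          rw [Finset.mem_Icc] at hq1 hq2
          refine ⟨⟨Finset.mem_Icc.mpr ⟨Nat.mul_pos hbpos (by omega),
              Nat.mul_le_mul_left b hq1.2⟩,
            Finset.mem_Icc.mpr ⟨Nat.mul_pos hbpos (by omega),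
              Nat.mul_le_mul_left b hq2.2⟩⟩, ?_, ?_⟩
          · simp only [ne_eq, Prod.mk.injEq]
            intro hcon
            exact hqne (Nat.eq_of_mul_eq_mul_left hbpos hcon)
          · have h0 : nearestIntDist
                ((fun n : ℕ => Int.fract ((n : ℝ) * α)) (b * q.1)
                  - (fun n : ℕ => Int.fract ((n : ℝ) * α)) (b * q.2)) = 0 := by
              apply nid_fract_sub_int _ _ ((q.1 : ℤ) * r.num - (q.2 : ℤ) * r.num)
              rw [hbk q.1, hbk q.2]
              push_cast
              ring
            rw [h0]
            positivity
    obtain ⟨N, h1, hlt⟩ := (hfr.and_eventually hev).exists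
    linarith
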